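/- Let p₁, p₂, p₃ ∈ ℝ³ be pairwise distinct, and suppose that for every pair i ≠ j one has (p_{i,1}, p_{i,2}) ≠ (p_{j,1}, p_{j,2}) and, for the remaining index k, the representative q_k = (p_{k,1}, p_{k,2}, |p_{k,3}|) satisfies: either ‖q_k − c_{p_i,p_j}‖ < r_{p_i,p_j}, or there is no β ∈ [0, 1] with (p_{k,1}, p_{k,2}) = β(p_{i,1}, p_{i,2}) + (1 − β)(p_{j,1}, p_{j,2}). Then for every m ∈ {1, 2, 3} there exists t ∈ T such that ‖t − p_m‖ < ‖t − p_l‖ for both l ≠ m. (Lemma 3, third case: under condition (10) every pursuer can reach some point of the target plane strictly before the other two, so the barrier depends on all three pursuers.) -/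
import Mathlib


noncomputable section

/-- The point of `ℝ³` with the given three coordinates. -/
def mk3 (x y z : ℝ) : EuclideanSpace ℝ (Fin 3) :=
  (WithLp.equiv 2 (Fin 3 → ℝ)).symm ![x, y, z]

/-- The projection of a point onto the target plane `T = {z | z₃ = 0}`. -/
def projT (p : EuclideanSpace ℝ (Fin 3)) : EuclideanSpace ℝ (Fin 3) :=
  mk3 (p 0) (p 1) 0

lemma mk3_apply0 (x y z : ℝ) : (mk3 x y z) 0 = x := by simp [mk3]
lemma mk3_apply1 (x y z : ℝ) : (mk3 x y z) 1 = y := by simp [mk3]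
lemma mk3_apply2 (x y z : ℝ) : (mk3 x y z) 2 = z := by simp [mk3]

lemma norm3 (x : EuclideanSpace ℝ (Fin 3)) :
    ‖x‖ = Real.sqrt ((x 0)^2 + (x 1)^2 + (x 2)^2) := by
  rw [EuclideanSpace.norm_eq]
  simp [Fin.sum_univ_three, sq_abs, Real.norm_eq_abs]

lemma norm3_lt {x y : EuclideanSpace ℝ (Fin 3)}
    (h : (x 0)^2 + (x 1)^2 + (x 2)^2 < (y 0)^2 + (y 1)^2 + (y 2)^2) : ‖x‖ < ‖y‖ := by
  rw [norm3, norm3]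
  exact Real.sqrt_lt_sqrt (by positivity) h

lemma halfplane (pm pi : EuclideanSpace ℝ (Fin 3)) (t0 t1 : ℝ)
    (h : 2*(t0*(pi 0 - pm 0) + t1*(pi 1 - pm 1)) <
      ((pi 0)^2 + (pi 1)^2 + (pi 2)^2) - ((pm 0)^2 + (pm 1)^2 + (pm 2)^2)) :
    ‖mk3 t0 t1 0 - pm‖ < ‖mk3 t0 t1 0 - pi‖ := by
  apply norm3_lt
  simp only [PiLp.sub_apply, mk3_apply0, mk3_apply1, mk3_apply2]
  nlinarith [h]

lemma twoforms (a1 a2 b1 b2 Di Dj : ℝ) (hA : 0 < a1^2 + a2^2) (hB : 0 < b1^2 + b2^2)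
    (hdot : -(Real.sqrt (a1^2+a2^2) * Real.sqrt (b1^2+b2^2)) < a1*b1 + a2*b2) :
    ∃ t0 t1 : ℝ, 2*(t0*a1 + t1*a2) < Di ∧ 2*(t0*b1 + t1*b2) < Dj := by
  set na := Real.sqrt (a1^2 + a2^2) with hna
  set nb := Real.sqrt (b1^2 + b2^2) with hnb
  have hnapos : 0 < na := Real.sqrt_pos.mpr hA
  have hnbpos : 0 < nb := Real.sqrt_pos.mpr hB
  have hnasq : na^2 = a1^2 + a2^2 := Real.sq_sqrt hA.le
  have hnbsq : nb^2 = b1^2 + b2^2 := Real.sq_sqrt hB.le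
  have hea : 0 < na + (a1*b1+a2*b2)/nb := by
    have h1 : -na < (a1*b1+a2*b2)/nb := by rw [lt_div_iff₀ hnbpos]; linarith
    linarith
  have heb : 0 < nb + (a1*b1+a2*b2)/na := by
    have h1 : -nb < (a1*b1+a2*b2)/na := by rw [lt_div_iff₀ hnapos]; nlinarith
    linarith
  set εa := na + (a1*b1+a2*b2)/nb with hεa
  set εb := nb + (a1*b1+a2*b2)/na with hεb
  clear_value εa εb
  obtain ⟨s, hs1, hs2⟩ : ∃ s : ℝ, |Di| < 2*s*εa ∧ |Dj| < 2*s*εb := by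
    refine ⟨|Di|/(2*εa) + |Dj|/(2*εb) + 1, ?_, ?_⟩
    · have h1 : |Di|/(2*εa)*(2*εa) = |Di| := div_mul_cancel₀ _ (by positivity)
      have h2 : 0 ≤ |Dj|/(2*εb) := by positivity
      have h3 : 2*(|Di|/(2*εa) + |Dj|/(2*εb) + 1)*εa
          = |Di| + (|Dj|/(2*εb))*(2*εa) + 2*εa := by linear_combination h1
      have h4 : 0 ≤ (|Dj|/(2*εb))*(2*εa) := mul_nonneg h2 (by linarith)
      linarith
    · have h1 : |Dj|/(2*εb)*(2*εb) = |Dj| := div_mul_cancel₀ _ (by positivity)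
      have h2 : 0 ≤ |Di|/(2*εa) := by positivity
      have h3 : 2*(|Di|/(2*εa) + |Dj|/(2*εb) + 1)*εb
          = |Dj| + (|Di|/(2*εa))*(2*εb) + 2*εb := by linear_combination h1
      have h4 : 0 ≤ (|Di|/(2*εa))*(2*εb) := mul_nonneg h2 (by linarith)
      linarith
  have e1 : (a1^2+a2^2)/na = na := by rw [div_eq_iff hnapos.ne', ← hnasq]; ring
  have e2 : (b1^2+b2^2)/nb = nb := by rw [div_eq_iff hnbpos.ne', ← hnbsq]; ring
  refine ⟨-(s*(a1/na + b1/nb)), -(s*(a2/na + b2/nb)), ?_, ?_⟩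
  · have hL : 2*((-(s*(a1/na + b1/nb)))*a1 + (-(s*(a2/na + b2/nb)))*a2) = -(2*s*εa) := by
      rw [hεa]; linear_combination (-2*s)*e1
    rw [hL]
    linarith [neg_abs_le Di]
  · have hL : 2*((-(s*(a1/na + b1/nb)))*b1 + (-(s*(a2/na + b2/nb)))*b2) = -(2*s*εb) := by
      rw [hεb]; linear_combination (-2*s)*e2
    rw [hL]
    linarith [neg_abs_le Dj]

lemma master (pm pi pj cij : EuclideanSpace ℝ (Fin 3))
    (hcT : cij 2 = 0)
    (hceq : ‖cij - pi‖ = ‖cij - pj‖)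
    (hpi : (pm 0, pm 1) ≠ (pi 0, pi 1)) (hpj : (pm 0, pm 1) ≠ (pj 0, pj 1))
    (hcond : ‖mk3 (pm 0) (pm 1) |pm 2| - cij‖ < ‖pi - cij‖ ∨
      ¬∃ β : ℝ, 0 ≤ β ∧ β ≤ 1 ∧
        pm 0 = β * pi 0 + (1 - β) * pj 0 ∧ pm 1 = β * pi 1 + (1 - β) * pj 1) :
    ∃ t : EuclideanSpace ℝ (Fin 3), t 2 = 0 ∧ ‖t - pm‖ < ‖t - pi‖ ∧ ‖t - pm‖ < ‖t - pj‖ := by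
  rcases hcond with h | hns
  · refine ⟨cij, hcT, ?_⟩
    have keyeq : ‖cij - pm‖ = ‖mk3 (pm 0) (pm 1) |pm 2| - cij‖ := by
      rw [norm3, norm3]
      simp only [PiLp.sub_apply, mk3_apply0, mk3_apply1, mk3_apply2, hcT]
      rw [show (0:ℝ) - pm 2 = -(pm 2) by ring, show |pm 2| - 0 = |pm 2| by ring]
      rw [neg_pow, sq_abs]; ring_nf
    have key : ‖cij - pm‖ < ‖cij - pi‖ := by
      rw [keyeq, ← norm_sub_rev pi]; exact h
    exact ⟨key, hceq ▸ key⟩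
  · have hA : 0 < (pi 0 - pm 0)^2 + (pi 1 - pm 1)^2 := by
      rcases lt_or_eq_of_le (by positivity : (0:ℝ) ≤ (pi 0 - pm 0)^2 + (pi 1 - pm 1)^2) with h | h
      · exact h
      · exfalso; apply hpi
        have e1 : pi 0 - pm 0 = 0 := by nlinarith [sq_nonneg (pi 0 - pm 0), sq_nonneg (pi 1 - pm 1)]
        have e2 : pi 1 - pm 1 = 0 := by nlinarith [sq_nonneg (pi 0 - pm 0), sq_nonneg (pi 1 - pm 1)]
        rw [Prod.mk.injEq]; exact ⟨by linarith, by linarith⟩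
    have hB : 0 < (pj 0 - pm 0)^2 + (pj 1 - pm 1)^2 := by
      rcases lt_or_eq_of_le (by positivity : (0:ℝ) ≤ (pj 0 - pm 0)^2 + (pj 1 - pm 1)^2) with h | h
      · exact h
      · exfalso; apply hpj
        have e1 : pj 0 - pm 0 = 0 := by nlinarith [sq_nonneg (pj 0 - pm 0), sq_nonneg (pj 1 - pm 1)]
        have e2 : pj 1 - pm 1 = 0 := by nlinarith [sq_nonneg (pj 0 - pm 0), sq_nonneg (pj 1 - pm 1)]
        rw [Prod.mk.injEq]; exact ⟨by linarith, by linarith⟩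
    set a1 := pi 0 - pm 0 with ha1
    set a2 := pi 1 - pm 1 with ha2
    set b1 := pj 0 - pm 0 with hb1
    set b2 := pj 1 - pm 1 with hb2
    have hdot : -(Real.sqrt (a1^2+a2^2) * Real.sqrt (b1^2+b2^2)) < a1*b1 + a2*b2 := by
      by_contra hle
      push_neg at hle
      set na := Real.sqrt (a1^2 + a2^2) with hna
      set nb := Real.sqrt (b1^2 + b2^2) with hnb
      have hnapos : 0 < na := Real.sqrt_pos.mpr hA
      have hnbpos : 0 < nb := Real.sqrt_pos.mpr hB
      have hnasq : na^2 = a1^2 + a2^2 := Real.sq_sqrt hA.le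
      have hnbsq : nb^2 = b1^2 + b2^2 := Real.sq_sqrt hB.le
      have h1 : (na*nb)^2 ≤ (a1*b1 + a2*b2)^2 := by nlinarith [mul_pos hnapos hnbpos]
      have h2 : (na*nb)^2 = (a1^2+a2^2)*(b1^2+b2^2) := by rw [mul_pow, hnasq, hnbsq]
      have lag : (a1*b2 - a2*b1)^2 = (a1^2+a2^2)*(b1^2+b2^2) - (a1*b1+a2*b2)^2 := by ring
      have hcross : a1*b2 - a2*b1 = 0 := by
        have h0 : (a1*b2 - a2*b1)^2 = 0 :=
          le_antisymm (by rw [lag]; linarith) (sq_nonneg _)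
        exact pow_eq_zero_iff two_ne_zero |>.mp h0
      have hDneg : a1*b1 + a2*b2 < 0 :=
        lt_of_le_of_lt hle (by nlinarith [mul_pos hnapos hnbpos])
      have hb1e : b1 * (a1^2+a2^2) = (a1*b1+a2*b2) * a1 := by linear_combination (-a2)*hcross
      have hb2e : b2 * (a1^2+a2^2) = (a1*b1+a2*b2) * a2 := by linear_combination a1*hcross
      have hpi0 : pi 0 = pm 0 + a1 := by rw [ha1]; ring
      have hpi1 : pi 1 = pm 1 + a2 := by rw [ha2]; ring
      have hpj0 : pj 0 = pm 0 + b1 := by rw [hb1]; ring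
      have hpj1 : pj 1 = pm 1 + b2 := by rw [hb2]; ring
      apply hns
      have hSD : (0:ℝ) < (a1^2+a2^2) - (a1*b1+a2*b2) := by linarith
      refine ⟨-(a1*b1+a2*b2)/((a1^2+a2^2) - (a1*b1+a2*b2)), ?_, ?_, ?_, ?_⟩
      · apply div_nonneg (by linarith) hSD.le
      · rw [div_le_one hSD]; linarith
      · rw [hpi0, hpj0]
        field_simp
        linear_combination -hb1e
      · rw [hpi1, hpj1]
        field_simp
        linear_combination -hb2e
    obtain ⟨t0, t1, ht1, ht2⟩ := twoforms a1 a2 b1 b2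
      (((pi 0)^2 + (pi 1)^2 + (pi 2)^2) - ((pm 0)^2 + (pm 1)^2 + (pm 2)^2))
      (((pj 0)^2 + (pj 1)^2 + (pj 2)^2) - ((pm 0)^2 + (pm 1)^2 + (pm 2)^2))
      hA hB hdot
    exact ⟨mk3 t0 t1 0, mk3_apply2 _ _ _, halfplane pm pi t0 t1 ht1, halfplane pm pj t0 t1 ht2⟩

/-- Lemma 3 (third case): if for every pair `i ≠ j` the horizontal projections differ and
the representative `q_k = (p_{k,1}, p_{k,2}, |p_{k,3}|)` of the remaining pursuer lies
strictly inside the circle of radius `r_{p_i,p_j}` centered at `c_{p_i,p_j}`, or its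
horizontal projection is not on the segment joining the projections of `p_i` and `p_j`,
then every pursuer can reach some point of the target plane strictly before the other
two — the barrier depends on all three pursuers. -/
theorem three_pursuer_all_active (p : Fin 3 → EuclideanSpace ℝ (Fin 3))
    (hdist : Function.Injective p)
    (c : Fin 3 → Fin 3 → EuclideanSpace ℝ (Fin 3))
    (hproj : ∀ i j, i ≠ j → (p i 0, p i 1) ≠ (p j 0, p j 1))
    (hcT : ∀ i j, i ≠ j → c i j 2 = 0)
    (hcline : ∀ i j, i ≠ j →
      ∃ u : ℝ, c i j = projT (p i) + u • (projT (p j) - projT (p i)))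
    (hceq : ∀ i j, i ≠ j → ‖c i j - p i‖ = ‖c i j - p j‖)
    (hcond : ∀ i j k : Fin 3, i ≠ j → k ≠ i → k ≠ j →
      ‖mk3 (p k 0) (p k 1) |p k 2| - c i j‖ < ‖p i - c i j‖ ∨
      ¬∃ β : ℝ, 0 ≤ β ∧ β ≤ 1 ∧
        p k 0 = β * p i 0 + (1 - β) * p j 0 ∧ p k 1 = β * p i 1 + (1 - β) * p j 1) :
    ∀ m : Fin 3, ∃ t : EuclideanSpace ℝ (Fin 3), t 2 = 0 ∧
      ∀ l, l ≠ m → ‖t - p m‖ < ‖t - p l‖ := by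
  intro m
  fin_cases m
  · obtain ⟨t, htT, h1, h2⟩ := master (p 0) (p 1) (p 2) (c 1 2)
      (hcT 1 2 (by decide)) (hceq 1 2 (by decide))
      (hproj 0 1 (by decide)) (hproj 0 2 (by decide))
      (hcond 1 2 0 (by decide) (by decide) (by decide))
    refine ⟨t, htT, ?_⟩
    intro l hl
    fin_cases l
    · simp at hl
    · exact h1
    · exact h2
  · obtain ⟨t, htT, h1, h2⟩ := master (p 1) (p 0) (p 2) (c 0 2)
      (hcT 0 2 (by decide)) (hceq 0 2 (by decide))
      (hproj 1 0 (by decide)) (hproj 1 2 (by decide))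
      (hcond 0 2 1 (by decide) (by decide) (by decide))
    refine ⟨t, htT, ?_⟩
    intro l hl
    fin_cases l
    · exact h1
    · simp at hl
    · exact h2
  · obtain ⟨t, htT, h1, h2⟩ := master (p 2) (p 0) (p 1) (c 0 1)
      (hcT 0 1 (by decide)) (hceq 0 1 (by decide))
      (hproj 2 0 (by decide)) (hproj 2 1 (by decide))
      (hcond 0 1 2 (by decide) (by decide) (by decide))
    refine ⟨t, htT, ?_⟩
    intro l hl
    fin_cases l
    · exact h1
    · exact h2
    · simp at hl
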